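/- Let n ≥ 2 and let β_1,…,β_{n−1} ∈ (0,1] with β_r < 1 for at least one r. For 1 ≤ r ≤ n−1 set c_r = β_r^{-1} if β_r < 1 and c_r = 0 if β_r = 1. Let A_2 be the n×n real matrix with (A_2)_{st} = 1 if s = t or t = n, (A_2)_{st} = −c_t if s > t and t < n, and (A_2)_{st} = 0 otherwise. Perform GE on A_2 with the diagonal pivots (1,1), …, (n−1,n−1). Then the intermediate growth factor at step n−1 satisfies ρ_{n−1}(A_2) = (∏_{r=1}^{n−1} (1 + c_r)) / (max_{1 ≤ r ≤ n−1} c_r). -/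

import Mathlib

open Finset Real

/-- One Gaussian elimination step on `A` with pivot position `(i, j)`:
`A_{st} - A_{sj} A_{it} / A_{ij}`. -/
noncomputable def geStep {m n : ℕ} (A : Matrix (Fin m) (Fin n) ℝ) (i : Fin m) (j : Fin n) :
    Matrix (Fin m) (Fin n) ℝ :=
  Matrix.of fun s t => A s t - A s j * A i t / A i j

/-- The matrix `A^{(r)}` after `r` GE steps on `A`, where step `r` uses pivot
position `piv (r - 1)` (so `piv` is 0-indexed). -/
noncomputable def geIter {m n : ℕ} (A : Matrix (Fin m) (Fin n) ℝ)
    (piv : ℕ → Fin m × Fin n) : ℕ → Matrix (Fin m) (Fin n) ℝ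
  | 0 => A
  | r + 1 => geStep (geIter A piv r) (piv r).1 (piv r).2

/-- Maximum absolute entry of a matrix. -/
noncomputable def maxAbs {m n : ℕ} (A : Matrix (Fin m) (Fin n) ℝ) : ℝ :=
  ⨆ s, ⨆ t, |A s t|

/-- The magnitude `p_r = |A^{(r-1)}_{i_r j_r}|` of the `r`-th pivot (1-indexed `r`). -/
noncomputable def pivMag {m n : ℕ} (A : Matrix (Fin m) (Fin n) ℝ)
    (piv : ℕ → Fin m × Fin n) (r : ℕ) : ℝ :=
  |geIter A piv (r - 1) (piv (r - 1)).1 (piv (r - 1)).2|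

/-- Modified Wilkinson matrix `A₂` built from the coefficients `c_r`:
`(A₂)_{st} = 1` if `s = t` or `t = n` (1-based), `(A₂)_{st} = -c_t` if `s > t` and
`t < n`, and `0` otherwise (0-based: column `t` corresponds to `c (t+1)`). -/
noncomputable def wilkA2 (n : ℕ) (c : ℕ → ℝ) : Matrix (Fin n) (Fin n) ℝ :=
  Matrix.of fun s t =>
    if (s : ℕ) = (t : ℕ) ∨ (t : ℕ) = n - 1 then 1
    else if (t : ℕ) < (s : ℕ) then -(c ((t : ℕ) + 1)) else 0

/-- Diagonal pivot positions `(1,1), (2,2), …` (0-based: `(r, r)` at step `r + 1`). -/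
def diagPiv (n : ℕ) (hn : 0 < n) : ℕ → Fin n × Fin n :=
  fun r => (⟨min r (n - 1), by omega⟩, ⟨min r (n - 1), by omega⟩)

set_option maxHeartbeats 2000000 in
lemma wilk_formula (n : ℕ) (hn : 2 ≤ n) (c : ℕ → ℝ) (h0 : 0 < n) :
    ∀ r : ℕ, r ≤ n - 1 → ∀ s t : Fin n,
      geIter (wilkA2 n c) (diagPiv n h0) r s t =
      if (s : ℕ) < r ∨ (t : ℕ) < r then 0
      else if (t : ℕ) = n - 1 then ∏ i ∈ Finset.Icc 1 r, (1 + c i)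
      else if (s : ℕ) = (t : ℕ) then 1
      else if (t : ℕ) < (s : ℕ) then -(c ((t : ℕ) + 1)) else 0 := by
  intro r
  induction r with
  | zero =>
    intro _ s t
    show wilkA2 n c s t = _
    simp only [wilkA2, Matrix.of_apply, Nat.not_lt_zero, or_self, if_false,
      Finset.Icc_eq_empty_of_lt (by norm_num : (0:ℕ) < 1), Finset.prod_empty]
    split_ifs <;> first | rfl | omega | tauto
  | succ r ih =>
    intro hr s t
    have hr' : r ≤ n - 1 := by omega
    have hrn : r ≤ n - 2 := by omega
    have hpiv : diagPiv n h0 r = (⟨r, by omega⟩, ⟨r, by omega⟩) := by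
      simp [diagPiv, Nat.min_eq_left (show r ≤ n - 1 by omega)]
    show geStep (geIter (wilkA2 n c) (diagPiv n h0) r) (diagPiv n h0 r).1 (diagPiv n h0 r).2 s t = _
    rw [hpiv]
    simp only [geStep, Matrix.of_apply]
    rw [ih hr', ih hr', ih hr', ih hr']
    rw [Finset.prod_Icc_succ_top (Nat.one_le_iff_ne_zero.mpr (Nat.succ_ne_zero r))]
    have hs := s.isLt
    have ht := t.isLt
    simp only [Fin.val_mk]
    split_ifs <;> first
      | ring1
      | (exfalso; omega)
      | (have hteq : (t : ℕ) + 1 = r + 1 := by omega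
         rw [hteq]; ring1)

lemma maxAbs_le {m n : ℕ} (A : Matrix (Fin m) (Fin n) ℝ) (x : ℝ) (hx : 0 ≤ x)
    (h : ∀ s t, |A s t| ≤ x) : maxAbs A ≤ x := by
  unfold maxAbs
  rcases Nat.eq_zero_or_pos m with hm | hm
  · subst hm
    rw [show (⨆ s : Fin 0, ⨆ t, |A s t|) = ⨆ s : Fin 0, ⨆ t, |A s t| from rfl]
    simp [Real.iSup_of_isEmpty]
    exact hx
  rcases Nat.eq_zero_or_pos n with hn | hn
  · subst hn
    simp [Real.iSup_of_isEmpty]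
    exact hx
  · haveI : Nonempty (Fin m) := ⟨⟨0, hm⟩⟩
    haveI : Nonempty (Fin n) := ⟨⟨0, hn⟩⟩
    exact ciSup_le fun s => ciSup_le fun t => h s t

lemma le_maxAbs {m n : ℕ} (A : Matrix (Fin m) (Fin n) ℝ) (s : Fin m) (t : Fin n) :
    |A s t| ≤ maxAbs A := by
  unfold maxAbs
  calc |A s t| ≤ ⨆ t', |A s t'| :=
        le_ciSup (f := fun t' => |A s t'|)
          (Set.Finite.bddAbove (Set.finite_range _)) t
    _ ≤ ⨆ s', ⨆ t', |A s' t'| :=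
        le_ciSup (f := fun s' => ⨆ t', |A s' t'|)
          (Set.Finite.bddAbove (Set.finite_range _)) s

set_option maxHeartbeats 1000000 in
/-- **Growth factor of `A₂` under partial pivoting.** With `c_r = β_r⁻¹` if `β_r < 1`
and `c_r = 0` if `β_r = 1`, performing GE on `A₂` with the diagonal pivots gives
`ρ_{n-1}(A₂) = (∏_{r=1}^{n-1} (1 + c_r)) / max_{1 ≤ r ≤ n-1} c_r`. -/
theorem wilkA2_growth_factor
    (n : ℕ) (hn : 2 ≤ n) (β : ℕ → ℝ)
    (hβ : ∀ r, 1 ≤ r → r ≤ n - 1 → 0 < β r ∧ β r ≤ 1)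
    (hmistake : ∃ r, 1 ≤ r ∧ r ≤ n - 1 ∧ β r < 1)
    (c : ℕ → ℝ)
    (hc : ∀ r, 1 ≤ r → r ≤ n - 1 → c r = if β r < 1 then (β r)⁻¹ else 0) :
    maxAbs (geIter (wilkA2 n c) (diagPiv n (by omega)) (n - 1)) / maxAbs (wilkA2 n c) =
      (∏ r ∈ Finset.Icc 1 (n - 1), (1 + c r)) /
        (Finset.Icc 1 (n - 1)).sup' (Finset.nonempty_Icc.mpr (by omega)) c := by
  have h0 : 0 < n := by omega
  have hne : (Finset.Icc 1 (n - 1)).Nonempty := Finset.nonempty_Icc.mpr (by omega)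
  set P : ℝ := ∏ r ∈ Finset.Icc 1 (n - 1), (1 + c r) with hPdef
  set S : ℝ := (Finset.Icc 1 (n - 1)).sup' hne c with hSdef
  -- basic facts about c
  have hc0 : ∀ r, 1 ≤ r → r ≤ n - 1 → 0 ≤ c r := by
    intro r h1 h2
    rw [hc r h1 h2]
    split_ifs with h
    · exact le_of_lt (inv_pos.mpr (hβ r h1 h2).1)
    · exact le_refl 0
  obtain ⟨r0, hr01, hr02, hr0β⟩ := hmistake
  have hr0c : 1 < c r0 := by
    rw [hc r0 hr01 hr02, if_pos hr0β]
    exact (one_lt_inv₀ (hβ r0 hr01 hr02).1).mpr hr0β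
  have hS1 : 1 < S :=
    lt_of_lt_of_le hr0c (Finset.le_sup' c (Finset.mem_Icc.mpr ⟨hr01, hr02⟩))
  have hP1 : (1 : ℝ) ≤ P := by
    rw [hPdef]
    calc (1 : ℝ) = ∏ _r ∈ Finset.Icc 1 (n - 1), (1 : ℝ) := by
          rw [Finset.prod_const_one]
      _ ≤ ∏ r ∈ Finset.Icc 1 (n - 1), (1 + c r) := by
          refine Finset.prod_le_prod (fun i _ => zero_le_one) fun i hi => ?_
          have := hc0 i (Finset.mem_Icc.mp hi).1 (Finset.mem_Icc.mp hi).2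
          linarith
  have hform := wilk_formula n hn c h0 (n - 1) le_rfl
  -- maxAbs of the final matrix
  have hM : maxAbs (geIter (wilkA2 n c) (diagPiv n h0) (n - 1)) = P := by
    apply le_antisymm
    · apply maxAbs_le _ _ (by linarith)
      intro s t
      have hs := s.isLt
      have ht := t.isLt
      rw [hform s t]
      split_ifs
      · simp only [abs_zero]; linarith
      · rw [abs_of_nonneg (by linarith)]
      · exfalso; omega
      · exfalso; omega
      · exfalso; omega
    · have hentry : geIter (wilkA2 n c) (diagPiv n h0) (n - 1)
          ⟨n - 1, by omega⟩ ⟨n - 1, by omega⟩ = P := by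
        rw [hform]
        rw [if_neg (by simp), if_pos rfl]
      calc P = |geIter (wilkA2 n c) (diagPiv n h0) (n - 1)
            ⟨n - 1, by omega⟩ ⟨n - 1, by omega⟩| := by
            rw [hentry, abs_of_nonneg (by linarith)]
        _ ≤ _ := le_maxAbs _ _ _
  -- maxAbs of the original matrix
  have hA : maxAbs (wilkA2 n c) = S := by
    apply le_antisymm
    · apply maxAbs_le _ _ (by linarith)
      intro s t
      have hs := s.isLt
      have ht := t.isLt
      simp only [wilkA2, Matrix.of_apply]
      split_ifs with h1 h2
      · simp only [abs_one]; linarith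
      · rw [abs_neg, abs_of_nonneg (hc0 _ (by omega) (by omega))]
        exact Finset.le_sup' c (Finset.mem_Icc.mpr ⟨by omega, by omega⟩)
      · simp only [abs_zero]; linarith
    · obtain ⟨rm, hrm, hrmS⟩ := Finset.exists_mem_eq_sup' hne c
      obtain ⟨hrm1, hrm2⟩ := Finset.mem_Icc.mp hrm
      have hentry : wilkA2 n c ⟨rm, by omega⟩ ⟨rm - 1, by omega⟩ = -(c rm) := by
        show (if rm = rm - 1 ∨ rm - 1 = n - 1 then (1 : ℝ)
            else if rm - 1 < rm then -(c (rm - 1 + 1)) else 0) = -(c rm)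
        rw [if_neg (by omega), if_pos (by omega), show rm - 1 + 1 = rm from by omega]
      calc S = |wilkA2 n c ⟨rm, by omega⟩ ⟨rm - 1, by omega⟩| := by
            rw [hentry, abs_neg, abs_of_nonneg (hc0 rm hrm1 hrm2), hSdef, hrmS]
        _ ≤ _ := le_maxAbs _ _ _
  rw [show (diagPiv n (by omega : 0 < n)) = diagPiv n h0 from rfl, hM, hA]
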